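/- arXiv:math/0310063 — 2 statements merged into one kernel-verified Lean document; each statement's English description precedes it below -/
import Mathlib

section
/- For every natural number n, ∫₀¹ p_{n+1}(x) · N p_n(x) dx = h_{n+1} / ( 2(2n+1)(2n+3) ), where h_{n+1} = 1 + 1/2 + ⋯ + 1/(n+1) is the (n+1)-th harmonic number, N p_n(x) = ∫₀ˣ (F(x) − F(t))/(x − t) dt, and F(t) = ∫₀ᵗ p_n(u) du. -/
open MeasureTheory intervalIntegral

/-- Shifted Legendre polynomial `p n x = (1/n!) dⁿ/dxⁿ (xⁿ(x-1)ⁿ)`. -/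
noncomputable def shiftedLegendre (n : ℕ) : ℝ → ℝ :=
  fun x => (1 / (Nat.factorial n) : ℝ) * iteratedDeriv n (fun t : ℝ => t ^ n * (t - 1) ^ n) x

open Polynomial


noncomputable def GG (n : ℕ) : ℝ[X] := X ^ n * (X - 1) ^ n

lemma integral_polyderiv (q : ℝ[X]) (a b : ℝ) :
    ∫ x in a..b, (derivative q).eval x = q.eval b - q.eval a := by
  refine intervalIntegral.integral_eq_sub_of_hasDerivAt (fun x _ => q.hasDerivAt x) ?_
  exact ((derivative q).continuous).intervalIntegrable _ _

lemma poly_ibp (q r : ℝ[X]) :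
    ∫ x in (0:ℝ)..1, (derivative q).eval x * r.eval x
      = q.eval 1 * r.eval 1 - q.eval 0 * r.eval 0
        - ∫ x in (0:ℝ)..1, q.eval x * (derivative r).eval x := by
  have h := integral_polyderiv (q * r) 0 1
  rw [derivative_mul] at h
  simp only [eval_add, eval_mul] at h
  rw [intervalIntegral.integral_add (f := fun x => (derivative q).eval x * r.eval x)
    (g := fun x => q.eval x * (derivative r).eval x)
    (((derivative q).continuous.mul r.continuous).intervalIntegrable _ _)
    ((q.continuous.mul (derivative r).continuous).intervalIntegrable _ _)] at h
  linarith

lemma dvd_deriv {c : ℝ} {m : ℕ} {q : ℝ[X]} (h : (X - C c) ^ (m + 1) ∣ q) :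
    (X - C c) ^ m ∣ derivative q := by
  obtain ⟨s, rfl⟩ := h
  rw [derivative_mul, derivative_pow]
  refine dvd_add ?_ ?_
  · exact Dvd.dvd.mul_right (Dvd.dvd.mul_right (Dvd.dvd.mul_left (dvd_refl _) _) _) _
  · exact Dvd.dvd.mul_right (pow_dvd_pow _ (Nat.le_succ m)) _

lemma dvd_iter_deriv {c : ℝ} : ∀ (k m : ℕ) {q : ℝ[X]}, (X - C c) ^ m ∣ q → k ≤ m →
    (X - C c) ^ (m - k) ∣ derivative^[k] q := by
  intro k
  induction k with
  | zero => intro m q h _; simpa using h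
  | succ k ih =>
    intro m q h hk
    have hm : 1 ≤ m := le_trans (by omega) hk
    rw [Function.iterate_succ_apply]
    have h1 : (X - C c) ^ (m - 1) ∣ derivative q :=
      dvd_deriv (by rwa [Nat.sub_add_cancel hm])
    have := ih (m - 1) h1 (by omega)
    rwa [show m - 1 - k = m - (k + 1) by omega] at this

lemma GG_boundary (n k : ℕ) (hk : k ≤ n) (c : ℝ) (hc : c = 0 ∨ c = 1) :
    (derivative^[k] (GG (n + 1))).eval c = 0 := by
  have hdvd : (X - C c) ^ (n + 1) ∣ GG (n + 1) := by
    rcases hc with rfl | rfl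
    · simp only [map_zero, sub_zero, GG]; exact dvd_mul_right _ _
    · simp only [map_one, GG]; exact dvd_mul_left _ _
  obtain ⟨s, hs⟩ := dvd_iter_deriv k (n + 1) hdvd (by omega)
  rw [hs]
  simp [sub_self, zero_pow (by omega : n + 1 - k ≠ 0)]

lemma ortho (n : ℕ) : ∀ (j m : ℕ), j ≤ m → m ≤ n →
    ∫ x in (0:ℝ)..1, (derivative^[m + 1] (GG (n + 1))).eval x * x ^ j = 0 := by
  intro j
  induction j with
  | zero =>
    intro m _ hmn
    simp only [pow_zero, mul_one]
    rw [Function.iterate_succ_apply', integral_polyderiv,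
      GG_boundary n m hmn 1 (Or.inr rfl), GG_boundary n m hmn 0 (Or.inl rfl), sub_zero]
  | succ j ih =>
    intro m hjm hmn
    have hm : 1 ≤ m := by omega
    rw [Function.iterate_succ_apply']
    have h := poly_ibp (derivative^[m] (GG (n + 1))) (X ^ (j + 1))
    rw [GG_boundary n m hmn 1 (Or.inr rfl), GG_boundary n m hmn 0 (Or.inl rfl)] at h
    simp only [zero_mul, sub_zero, zero_sub, derivative_X_pow, eval_mul, eval_pow, eval_X,
      eval_C, Nat.cast_add, Nat.cast_one, Nat.add_sub_cancel] at h
    have h2 : ∫ x in (0:ℝ)..1,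
        eval x (derivative^[m] (GG (n + 1))) * (((j:ℝ) + 1) * x ^ j)
        = ((j:ℝ) + 1) * ∫ x in (0:ℝ)..1, eval x (derivative^[m] (GG (n + 1))) * x ^ j := by
      rw [← intervalIntegral.integral_const_mul]
      congr 1; ext x; ring
    have h3 : derivative^[m] (GG (n + 1)) = derivative^[(m - 1) + 1] (GG (n + 1)) := by
      congr 1; omega
    have h4 := ih (m - 1) (by omega) (by omega)
    rw [← h3] at h4
    rw [h2, h4, mul_zero, neg_zero] at h
    simpa using h

lemma mom (n : ℕ) : ∀ m, m ≤ n + 1 →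
    ∫ x in (0:ℝ)..1, (derivative^[m] (GG (n + 1))).eval x * x ^ m
      = (-1 : ℝ) ^ m * (Nat.factorial m : ℝ) * ∫ x in (0:ℝ)..1, (GG (n + 1)).eval x := by
  intro m
  induction m with
  | zero => intro _; simp
  | succ m ih =>
    intro hm
    rw [Function.iterate_succ_apply']
    have h := poly_ibp (derivative^[m] (GG (n + 1))) (X ^ (m + 1))
    rw [GG_boundary n m (by omega) 1 (Or.inr rfl), GG_boundary n m (by omega) 0 (Or.inl rfl)] at h
    simp only [zero_mul, sub_zero, zero_sub, derivative_X_pow, eval_mul, eval_pow, eval_X,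
      eval_C, Nat.cast_add, Nat.cast_one, Nat.add_sub_cancel] at h
    have h2 : ∫ x in (0:ℝ)..1,
        eval x (derivative^[m] (GG (n + 1))) * (((m:ℝ) + 1) * x ^ m)
        = ((m:ℝ) + 1) * ∫ x in (0:ℝ)..1, eval x (derivative^[m] (GG (n + 1))) * x ^ m := by
      rw [← intervalIntegral.integral_const_mul]
      congr 1; ext x; ring
    rw [h2, ih (by omega)] at h
    rw [h, Nat.factorial_succ]
    push_cast
    ring

lemma beta_poly : ∀ (b a : ℕ),
    ∫ x in (0:ℝ)..1, x ^ a * (x - 1) ^ b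
      = (-1 : ℝ) ^ b * (Nat.factorial a) * (Nat.factorial b) / (Nat.factorial (a + b + 1)) := by
  intro b
  induction b with
  | zero =>
    intro a
    simp only [pow_zero, mul_one, integral_pow, one_pow, Nat.factorial_zero]
    rw [Nat.factorial_succ]
    push_cast
    rw [zero_pow (by omega : a + 1 ≠ 0)]
    have h0 : (Nat.factorial a : ℝ) ≠ 0 := Nat.cast_ne_zero.mpr (Nat.factorial_ne_zero a)
    have h1 : (a : ℝ) + 1 ≠ 0 := by positivity
    field_simp
    norm_num
  | succ b ih =>
    intro a
    have h := poly_ibp (X ^ (a + 1)) ((X - 1) ^ (b + 1))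
    have hd1 : derivative ((X : ℝ[X]) ^ (a + 1)) = C ((a:ℝ) + 1) * X ^ a := by
      rw [derivative_X_pow]; push_cast; simp
    have hd2 : derivative (((X : ℝ[X]) - 1) ^ (b + 1)) = C ((b:ℝ) + 1) * (X - 1) ^ b := by
      rw [derivative_pow]
      simp only [derivative_sub, derivative_X, derivative_one, sub_zero, mul_one,
        Nat.add_sub_cancel]
      push_cast; ring
    rw [hd1, hd2] at h
    simp only [eval_mul, eval_pow, eval_C, eval_X, eval_sub, eval_one, one_pow, sub_self,
      zero_pow (Nat.succ_ne_zero b), mul_zero, zero_mul, zero_sub, sub_zero, zero_pow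
      (Nat.succ_ne_zero a)] at h
    have e1 : ∫ x in (0:ℝ)..1, ((a:ℝ) + 1) * x ^ a * (x - 1) ^ (b + 1)
        = ((a:ℝ) + 1) * ∫ x in (0:ℝ)..1, x ^ a * (x - 1) ^ (b + 1) := by
      rw [← intervalIntegral.integral_const_mul]; congr 1; ext x; ring
    have e2 : ∫ x in (0:ℝ)..1, x ^ (a + 1) * (((b:ℝ) + 1) * (x - 1) ^ b)
        = ((b:ℝ) + 1) * ∫ x in (0:ℝ)..1, x ^ (a + 1) * (x - 1) ^ b := by
      rw [← intervalIntegral.integral_const_mul]; congr 1; ext x; ring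
    rw [e1, e2, ih (a + 1)] at h
    have ha : ((a:ℝ) + 1) ≠ 0 := by positivity
    have key : ∫ x in (0:ℝ)..1, x ^ a * (x - 1) ^ (b + 1)
        = -(((b:ℝ) + 1) / ((a:ℝ) + 1))
          * ((-1 : ℝ) ^ b * (Nat.factorial (a+1)) * (Nat.factorial b)
              / (Nat.factorial (a + 1 + b + 1))) := by
      field_simp at h ⊢
      linarith
    rw [key]
    have hfa : Nat.factorial (a + 1) = (a + 1) * Nat.factorial a := Nat.factorial_succ a
    have hfb : Nat.factorial (b + 1) = (b + 1) * Nat.factorial b := Nat.factorial_succ b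
    have hix : a + 1 + b + 1 = a + (b + 1) + 1 := by omega
    rw [hix, hfa, hfb]
    have hne : (Nat.factorial (a + (b + 1) + 1) : ℝ) ≠ 0 :=
      Nat.cast_ne_zero.mpr (Nat.factorial_ne_zero _)
    push_cast
    field_simp
    ring

noncomputable def PP (n : ℕ) : ℝ[X] := C (1 / (Nat.factorial n : ℝ)) * derivative^[n] (GG n)

lemma iteratedDeriv_polyeval (k : ℕ) : ∀ (q : ℝ[X]) (x : ℝ),
    iteratedDeriv k (fun t => q.eval t) x = (derivative^[k] q).eval x := by
  induction k with
  | zero => simp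
  | succ k ih =>
    intro q x
    rw [iteratedDeriv_succ']
    have h : deriv (fun t => q.eval t) = fun t => (derivative q).eval t :=
      funext fun t => Polynomial.deriv q
    rw [h, Function.iterate_succ_apply]
    exact ih _ x

lemma sL_eval (n : ℕ) (x : ℝ) : shiftedLegendre n x = (PP n).eval x := by
  unfold _root_.shiftedLegendre PP
  rw [eval_mul, eval_C]
  congr 1
  have : (fun t : ℝ => t ^ n * (t - 1) ^ n) = fun t => (GG n).eval t := by
    funext t; simp [GG]
  rw [this, iteratedDeriv_polyeval]

lemma XsubOne_monic : ((X : ℝ[X]) - 1).Monic := by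
  simpa using monic_X_sub_C (1 : ℝ)

lemma GG_monic (n : ℕ) : (GG n).Monic :=
  (monic_X_pow n).mul (XsubOne_monic.pow n)

lemma GG_natDegree (n : ℕ) : (GG n).natDegree = 2 * n := by
  rw [GG, (monic_X_pow n).natDegree_mul (XsubOne_monic.pow n), natDegree_X_pow,
    natDegree_pow]
  have : ((X : ℝ[X]) - 1).natDegree = 1 := by
    simpa using natDegree_X_sub_C (1 : ℝ)
  rw [this]
  omega

lemma PP_natDegree_le (n : ℕ) : (PP n).natDegree ≤ n := by
  refine le_trans (natDegree_C_mul_le _ _) ?_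
  refine le_trans (natDegree_iterate_derivative _ _) ?_
  rw [GG_natDegree]
  omega

lemma PP_coeff_top (n : ℕ) :
    (PP n).coeff n = (Nat.factorial (2 * n) : ℝ) / ((Nat.factorial n : ℝ) * (Nat.factorial n : ℝ)) := by
  rw [PP, coeff_C_mul, coeff_iterate_derivative]
  have hcoeff : (GG n).coeff (n + n) = 1 := by
    have := (GG_monic n).coeff_natDegree
    rwa [GG_natDegree, show 2 * n = n + n by omega] at this
  rw [hcoeff, nsmul_eq_mul, mul_one]
  have hdf : (Nat.factorial n) * ((n + n).descFactorial n) = Nat.factorial (2 * n) := by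
    have := Nat.factorial_mul_descFactorial (show n ≤ n + n by omega)
    rw [show n + n - n = n by omega] at this
    rw [this]; congr 1; omega
  have hne : (Nat.factorial n : ℝ) ≠ 0 := Nat.cast_ne_zero.mpr (Nat.factorial_ne_zero n)
  field_simp
  rw [← hdf]
  push_cast
  ring

lemma sL_sum (n : ℕ) (x : ℝ) :
    shiftedLegendre n x = ∑ k ∈ Finset.range (n + 1), (PP n).coeff k * x ^ k := by
  rw [sL_eval]
  exact eval_eq_sum_range' (lt_of_le_of_lt (PP_natDegree_le n) (Nat.lt_succ_self n)) x

lemma F_eval (n : ℕ) (t : ℝ) :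
    ∫ u in (0:ℝ)..t, shiftedLegendre n u
      = ∑ k ∈ Finset.range (n + 1), (PP n).coeff k * (t ^ (k + 1) / ((k : ℝ) + 1)) := by
  have h1 : ∫ u in (0:ℝ)..t, shiftedLegendre n u
      = ∫ u in (0:ℝ)..t, ∑ k ∈ Finset.range (n + 1), (PP n).coeff k * u ^ k := by
    simp only [sL_sum]
  rw [h1, intervalIntegral.integral_finset_sum]
  · refine Finset.sum_congr rfl fun k _ => ?_
    rw [intervalIntegral.integral_const_mul, integral_pow, zero_pow (Nat.succ_ne_zero k),
      sub_zero]
  · intro k _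
    exact (continuous_const.mul (continuous_pow k)).intervalIntegrable _ _

lemma inner_eval (n : ℕ) (x : ℝ) :
    (∫ t in (0:ℝ)..x,
        ((∫ u in (0:ℝ)..x, shiftedLegendre n u) - ∫ u in (0:ℝ)..t, shiftedLegendre n u)
          / (x - t))
    = ∑ k ∈ Finset.range (n + 1),
        (PP n).coeff k / ((k : ℝ) + 1)
          * (∑ i ∈ Finset.range (k + 1), (1 : ℝ) / ((i : ℝ) + 1)) * x ^ (k + 1) := by
  set g : ℝ → ℝ := fun t => ∑ k ∈ Finset.range (n + 1),
    (PP n).coeff k / ((k : ℝ) + 1) * ∑ j ∈ Finset.range (k + 1), x ^ j * t ^ (k - j) with hg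
  have step1 : (∫ t in (0:ℝ)..x,
        ((∫ u in (0:ℝ)..x, shiftedLegendre n u) - ∫ u in (0:ℝ)..t, shiftedLegendre n u)
          / (x - t)) = ∫ t in (0:ℝ)..x, g t := by
    apply intervalIntegral.integral_congr_ae
    have hx : ∀ᵐ t : ℝ ∂(MeasureTheory.volume), t ≠ x := by
      rw [MeasureTheory.ae_iff]
      have : {t : ℝ | ¬ t ≠ x} = {x} := by ext t; simp
      rw [this]
      exact MeasureTheory.measure_singleton x
    refine hx.mono fun t ht _ => ?_
    have hxt : x - t ≠ 0 := sub_ne_zero.2 (Ne.symm ht)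
    rw [F_eval, F_eval, ← Finset.sum_sub_distrib, Finset.sum_div, hg]
    refine Finset.sum_congr rfl fun k _ => ?_
    have e : x ^ (k + 1) - t ^ (k + 1)
        = (∑ j ∈ Finset.range (k + 1), x ^ j * t ^ (k - j)) * (x - t) := by
      have h := geom_sum₂_mul x t (k + 1)
      simp only [Nat.add_sub_cancel] at h
      exact h.symm
    have e2 : ((PP n).coeff k * (x ^ (k + 1) / ((k : ℝ) + 1))
          - (PP n).coeff k * (t ^ (k + 1) / ((k : ℝ) + 1))) / (x - t)
        = (PP n).coeff k / ((k : ℝ) + 1) * ((x ^ (k + 1) - t ^ (k + 1)) / (x - t)) := by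
      ring
    rw [e2, e, mul_div_cancel_right₀ _ hxt]
  rw [step1, hg]
  rw [intervalIntegral.integral_finset_sum
    (f := fun k t => (PP n).coeff k / ((k : ℝ) + 1) * ∑ j ∈ Finset.range (k + 1), x ^ j * t ^ (k - j))
    (fun k _ =>
    (continuous_const.mul (continuous_finset_sum _ fun j _ =>
      continuous_const.mul (continuous_pow _))).intervalIntegrable _ _)]
  refine Finset.sum_congr rfl fun k hk => ?_
  rw [intervalIntegral.integral_const_mul,
    intervalIntegral.integral_finset_sum (f := fun j t => x ^ j * t ^ (k - j)) (fun j _ =>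
      (continuous_const.mul (continuous_pow _)).intervalIntegrable _ _)]
  have hterm : ∀ j ∈ Finset.range (k + 1),
      (∫ t in (0:ℝ)..x, x ^ j * t ^ (k - j))
        = (1 : ℝ) / (((k - j : ℕ) : ℝ) + 1) * x ^ (k + 1) := by
    intro j hj
    have hjk : j ≤ k := Finset.mem_range_succ_iff.mp hj
    rw [intervalIntegral.integral_const_mul, integral_pow, zero_pow (Nat.succ_ne_zero _),
      sub_zero]
    rw [show x ^ j * (x ^ (k - j + 1) / (((k - j : ℕ) : ℝ) + 1))
        = (1 : ℝ) / (((k - j : ℕ) : ℝ) + 1) * (x ^ j * x ^ (k - j + 1)) by ring,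
      ← pow_add, show j + (k - j + 1) = k + 1 by omega]
  rw [Finset.sum_congr rfl hterm]
  have hreflect := Finset.sum_range_reflect
    (fun i => (1 : ℝ) / ((i : ℝ) + 1) * x ^ (k + 1)) (k + 1)
  simp only [Nat.add_sub_cancel] at hreflect
  rw [hreflect, ← Finset.sum_mul, mul_assoc]

lemma sL_cont (n : ℕ) : Continuous (shiftedLegendre n) := by
  have h : _root_.shiftedLegendre n = fun x => (PP n).eval x := funext (sL_eval n)
  rw [h]
  exact (PP n).continuous

lemma sL_moment (n j : ℕ) : ∫ x in (0:ℝ)..1, shiftedLegendre (n + 1) x * x ^ j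
    = (1 / (Nat.factorial (n + 1) : ℝ))
      * ∫ x in (0:ℝ)..1, (derivative^[n + 1] (GG (n + 1))).eval x * x ^ j := by
  rw [← intervalIntegral.integral_const_mul]
  refine intervalIntegral.integral_congr fun x _ => ?_
  rw [sL_eval, PP, eval_mul, eval_C]
  ring

lemma sL_moment_zero (n j : ℕ) (hj : j ≤ n) :
    ∫ x in (0:ℝ)..1, shiftedLegendre (n + 1) x * x ^ j = 0 := by
  rw [sL_moment, ortho n j n hj le_rfl, mul_zero]

lemma GG_integral (n : ℕ) : ∫ x in (0:ℝ)..1, (GG (n + 1)).eval x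
    = (-1 : ℝ) ^ (n + 1) * (Nat.factorial (n + 1)) * (Nat.factorial (n + 1))
        / (Nat.factorial (2 * n + 3)) := by
  have h : ∫ x in (0:ℝ)..1, (GG (n + 1)).eval x
      = ∫ x in (0:ℝ)..1, x ^ (n + 1) * (x - 1) ^ (n + 1) := by
    refine intervalIntegral.integral_congr fun x _ => ?_
    simp [GG]
  rw [h, beta_poly (n + 1) (n + 1), show n + 1 + (n + 1) + 1 = 2 * n + 3 by omega]

lemma sL_moment_top (n : ℕ) :
    ∫ x in (0:ℝ)..1, shiftedLegendre (n + 1) x * x ^ (n + 1)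
      = (Nat.factorial (n + 1) : ℝ) * (Nat.factorial (n + 1)) / (Nat.factorial (2 * n + 3)) := by
  rw [sL_moment, mom n (n + 1) le_rfl, GG_integral]
  have h1 : (Nat.factorial (n + 1) : ℝ) ≠ 0 := Nat.cast_ne_zero.mpr (Nat.factorial_ne_zero _)
  have h2 : (Nat.factorial (2 * n + 3) : ℝ) ≠ 0 := Nat.cast_ne_zero.mpr (Nat.factorial_ne_zero _)
  have hsq : ((-1 : ℝ) ^ (n + 1)) * ((-1 : ℝ) ^ (n + 1)) = 1 := by
    rw [← pow_add]
    exact Even.neg_one_pow ⟨n + 1, by omega⟩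
  field_simp
  linear_combination hsq

theorem stmt16 (n : ℕ) :
    ∫ x in (0:ℝ)..1, shiftedLegendre (n + 1) x *
        (∫ t in (0:ℝ)..x,
          ((∫ u in (0:ℝ)..x, shiftedLegendre n u) - ∫ u in (0:ℝ)..t, shiftedLegendre n u)
            / (x - t)) =
      (∑ i ∈ Finset.range (n + 1), (1 : ℝ) / ((i : ℝ) + 1)) /
        (2 * (2 * (n : ℝ) + 1) * (2 * (n : ℝ) + 3)) := by
  have step1 : ∫ x in (0:ℝ)..1, shiftedLegendre (n + 1) x *
        (∫ t in (0:ℝ)..x,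
          ((∫ u in (0:ℝ)..x, shiftedLegendre n u) - ∫ u in (0:ℝ)..t, shiftedLegendre n u)
            / (x - t))
      = ∫ x in (0:ℝ)..1, ∑ k ∈ Finset.range (n + 1),
          ((PP n).coeff k / ((k : ℝ) + 1)
            * (∑ i ∈ Finset.range (k + 1), (1 : ℝ) / ((i : ℝ) + 1)))
          * (shiftedLegendre (n + 1) x * x ^ (k + 1)) := by
    refine intervalIntegral.integral_congr fun x _ => ?_
    rw [inner_eval, Finset.mul_sum]
    refine Finset.sum_congr rfl fun k _ => ?_
    ring
  rw [step1, intervalIntegral.integral_finset_sum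
    (f := fun k x => ((PP n).coeff k / ((k : ℝ) + 1)
            * (∑ i ∈ Finset.range (k + 1), (1 : ℝ) / ((i : ℝ) + 1)))
          * (_root_.shiftedLegendre (n + 1) x * x ^ (k + 1))) (fun k _ =>
    (continuous_const.mul ((sL_cont (n + 1)).mul (continuous_pow _))).intervalIntegrable _ _)]
  have step2 : ∀ k ∈ Finset.range (n + 1), k ≠ n →
      (∫ x in (0:ℝ)..1, ((PP n).coeff k / ((k : ℝ) + 1)
        * (∑ i ∈ Finset.range (k + 1), (1 : ℝ) / ((i : ℝ) + 1)))
        * (shiftedLegendre (n + 1) x * x ^ (k + 1))) = 0 := by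
    intro k hk hkn
    rw [intervalIntegral.integral_const_mul,
      sL_moment_zero n (k + 1) (by simp at hk; omega), mul_zero]
  rw [Finset.sum_eq_single_of_mem n (Finset.self_mem_range_succ n) step2,
    intervalIntegral.integral_const_mul, sL_moment_top, PP_coeff_top]
  have h1 : (Nat.factorial (n + 1) : ℝ) ≠ 0 := Nat.cast_ne_zero.mpr (Nat.factorial_ne_zero _)
  have h2 : (Nat.factorial (2 * n + 3) : ℝ) ≠ 0 := Nat.cast_ne_zero.mpr (Nat.factorial_ne_zero _)
  have h3 : (Nat.factorial n : ℝ) ≠ 0 := Nat.cast_ne_zero.mpr (Nat.factorial_ne_zero _)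
  have h4 : (Nat.factorial (2 * n) : ℝ) ≠ 0 := Nat.cast_ne_zero.mpr (Nat.factorial_ne_zero _)
  have e1 : (Nat.factorial (n + 1) : ℝ) = ((n : ℝ) + 1) * (Nat.factorial n) := by
    rw [Nat.factorial_succ]; push_cast; ring
  have e2 : (Nat.factorial (2 * n + 3) : ℝ)
      = (2 * (n : ℝ) + 3) * (2 * (n : ℝ) + 2) * (2 * (n : ℝ) + 1) * (Nat.factorial (2 * n)) := by
    rw [show 2 * n + 3 = (2 * n + 2) + 1 by omega, Nat.factorial_succ,
      show 2 * n + 2 = (2 * n + 1) + 1 by omega, Nat.factorial_succ,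
      show 2 * n + 1 = (2 * n) + 1 by omega, Nat.factorial_succ]
    push_cast; ring
  rw [e1, e2]
  have hn1 : ((n : ℝ) + 1) ≠ 0 := by positivity
  have hd1 : (2 * (n : ℝ) + 1) ≠ 0 := by positivity
  have hd2 : (2 * (n : ℝ) + 2) ≠ 0 := by positivity
  have hd3 : (2 * (n : ℝ) + 3) ≠ 0 := by positivity
  field_simp
end

section
/- Let m, n ≥ 1 be natural numbers. Then the quantities K satisfy the recurrence (n+1)·K(m,n) − (m+1)·K(n,m) = (n−1)·K(m−1,n−1) − (m−1)·K(n−1,m−1), where K(m,n) = Σ_{r=0}^{m+n} S(m,n,r)/(r+2)² and S(m,n,r) is the coefficient of x^{r+1} in the polynomial p_m(x)·q_{n+1}(x), with q_{n+1}(x) = ∫₀ˣ p_n(t) dt. -/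
open Polynomial

/-- The shifted Legendre polynomial `pₙ(x) = (1/n!) dⁿ/dxⁿ (xⁿ(x-1)ⁿ)`, as a polynomial. -/
noncomputable def shiftedLegendrePoly (n : ℕ) : Polynomial ℝ :=
  C ((Nat.factorial n : ℝ))⁻¹ * (derivative^[n] (X ^ n * (X - 1) ^ n))

/-- The integrated shifted Legendre polynomial `q_{n+1}(x) = ∫₀ˣ pₙ(t) dt`. -/
noncomputable def qPoly (n : ℕ) : Polynomial ℝ :=
  ∑ k ∈ Finset.range (n + 1), C ((shiftedLegendrePoly n).coeff k / ((k : ℝ) + 1)) * X ^ (k + 1)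

/-- `S m n r` is the coefficient of `x^(r+1)` in `p_m(x) * q_{n+1}(x)`. -/
noncomputable def S (m n r : ℕ) : ℝ := (shiftedLegendrePoly m * qPoly n).coeff (r + 1)


/-- `K m n = ∑_{r=0}^{m+n} S(m,n,r)/(r+2)²`. -/
noncomputable def K (m n : ℕ) : ℝ := ∑ r ∈ Finset.range (m + n + 1), S m n r / ((r : ℝ) + 2) ^ 2

open Finset Nat

noncomputable def aa (n k : ℕ) : ℝ := (-1)^(n-k) * (n.choose k) * ((n+k).choose k)

lemma shiftedLegendre_eq_sum (n : ℕ) :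
    shiftedLegendrePoly n = ∑ k ∈ range (n+1), C (aa n k) * X ^ k := by
  have h1 : (X ^ n * (X - 1) ^ n : ℝ[X])
      = ∑ k ∈ range (n+1), C ((-1 : ℝ)^(n-k) * (n.choose k)) * X ^ (n+k) := by
    rw [sub_eq_add_neg, add_pow, Finset.mul_sum]
    refine Finset.sum_congr rfl fun k hk => ?_
    have : (-1 : ℝ[X]) = C (-1 : ℝ) := by simp
    rw [this, ← C_pow, ← C_eq_natCast]
    rw [pow_add, C_mul]
    ring
  rw [shiftedLegendrePoly, h1, iterate_derivative_sum, Finset.mul_sum]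
  refine Finset.sum_congr rfl fun k hk => ?_
  rw [iterate_derivative_C_mul, iterate_derivative_X_pow_eq_C_mul,
    show n + k - n = k from by omega]
  rw [Nat.descFactorial_eq_factorial_mul_choose, Nat.choose_symm_add]
  rw [aa]
  simp only [← mul_assoc, ← C_mul]
  congr 2
  have : (Nat.factorial n : ℝ) ≠ 0 := by positivity
  push_cast
  field_simp

lemma cchoose (a b c : ℕ) (h : a + b = c) :
    (c.choose a : ℝ) = (c)! / ((a)! * (b)!) := by
  subst h; exact_mod_cast Nat.cast_add_choose (K := ℝ)

lemma fact_cast_ne (m : ℕ) : ((m ! : ℕ) : ℝ) ≠ 0 := by positivity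

lemma aa_eq_zero {n k : ℕ} (h : n < k) : aa n k = 0 := by
  simp [aa, Nat.choose_eq_zero_of_lt h]

lemma coeff_p (n j : ℕ) : (shiftedLegendrePoly n).coeff j = aa n j := by
  rw [shiftedLegendre_eq_sum, finset_sum_coeff]
  simp only [coeff_C_mul, coeff_X_pow, mul_ite, mul_one, mul_zero]
  rw [Finset.sum_ite_eq (range (n+1)) j (fun k => aa n k)]
  by_cases h : j ≤ n
  · simp [Finset.mem_range, Nat.lt_succ_of_le h]
  · simp only [Finset.mem_range, if_neg (by omega : ¬ j < n + 1)]
    exact (aa_eq_zero (by omega)).symm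

lemma coeff_q_zero (n : ℕ) : (qPoly n).coeff 0 = 0 := by
  rw [qPoly, finset_sum_coeff]
  simp

lemma coeff_q_succ (n i : ℕ) : (qPoly n).coeff (i+1) = aa n i / ((i : ℝ) + 1) := by
  rw [qPoly, finset_sum_coeff]
  simp only [coeff_C_mul, coeff_X_pow, mul_ite, mul_one, mul_zero, coeff_p,
    Nat.add_right_cancel_iff]
  rw [Finset.sum_ite_eq (range (n+1)) i (fun k => aa n k / ((k:ℝ)+1))]
  by_cases h : i ≤ n
  · simp [Finset.mem_range, Nat.lt_succ_of_le h]
  · simp only [Finset.mem_range, if_neg (by omega : ¬ i < n + 1)]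
    rw [aa_eq_zero (by omega)]
    simp

lemma SA_main (k d : ℕ) :
    2*((k:ℝ)+(d:ℝ)+3) * aa (k+d+2) k / ((k:ℝ)+1)
      = 2 * aa (k+d+2) k - aa (k+d+2) (k+1) - aa (k+d+1) (k+1) := by
  unfold aa
  rw [show k+d+2-k = d+2 from by omega, show k+d+2-(k+1) = d+1 from by omega,
      show k+d+1-(k+1) = d from by omega,
      show k+d+2+k = 2*k+d+2 from by omega, show k+d+2+(k+1) = 2*k+d+3 from by omega,
      show k+d+1+(k+1) = 2*k+d+2 from by omega]
  rw [cchoose k (d+2) (k+d+2) (by omega), cchoose k (k+d+2) (2*k+d+2) (by omega),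
      cchoose (k+1) (d+1) (k+d+2) (by omega), cchoose (k+1) (k+d+2) (2*k+d+3) (by omega),
      cchoose (k+1) d (k+d+1) (by omega), cchoose (k+1) (k+d+1) (2*k+d+2) (by omega)]
  have s1 : (-1:ℝ)^(d+2) = (-1)^d := by rw [pow_add]; norm_num
  have s2 : (-1:ℝ)^(d+1) = -((-1:ℝ)^d) := by rw [pow_succ]; ring
  rw [s1, s2]
  have e1 : ((k+1)! : ℝ) = ((k:ℝ)+1) * (k ! : ℕ) := by
    rw [Nat.factorial_succ]; push_cast; ring
  have e2 : ((d+2)! : ℝ) = ((d:ℝ)+2) * ((d:ℝ)+1) * (d ! : ℕ) := by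
    rw [show d+2 = (d+1)+1 from rfl, Nat.factorial_succ, Nat.factorial_succ]; push_cast; ring
  have e3 : ((d+1)! : ℝ) = ((d:ℝ)+1) * (d ! : ℕ) := by
    rw [Nat.factorial_succ]; push_cast; ring
  have e4 : ((k+d+2)! : ℝ) = ((k:ℝ)+(d:ℝ)+2) * ((k+d+1)! : ℕ) := by
    rw [show k+d+2 = (k+d+1)+1 from rfl, Nat.factorial_succ]; push_cast; ring
  have e5 : ((2*k+d+3)! : ℝ) = (2*(k:ℝ)+(d:ℝ)+3) * ((2*k+d+2)! : ℕ) := by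
    rw [show 2*k+d+3 = (2*k+d+2)+1 from rfl, Nat.factorial_succ]; push_cast; ring
  rw [e1, e2, e3, e4, e5]
  have h1 : ((k:ℝ)+1) ≠ 0 := by positivity
  have h2 : ((d:ℝ)+1) ≠ 0 := by positivity
  have h3 : ((d:ℝ)+2) ≠ 0 := by positivity
  have h4 : ((k:ℝ)+(d:ℝ)+2) ≠ 0 := by positivity
  have h5 := fact_cast_ne k
  have h6 := fact_cast_ne d
  have h7 := fact_cast_ne (k+d+1)
  have h8 := fact_cast_ne (2*k+d+2)
  field_simp
  ring

lemma SB_main (k d : ℕ) :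
    2*((k:ℝ)+(d:ℝ)+1) * aa (k+d+1) k / ((k:ℝ)+1)
      = aa (k+d+2) (k+1) - 2 * aa (k+d+1) k + aa (k+d+1) (k+1) := by
  unfold aa
  rw [show k+d+1-k = d+1 from by omega, show k+d+2-(k+1) = d+1 from by omega,
      show k+d+1-(k+1) = d from by omega,
      show k+d+1+k = 2*k+d+1 from by omega, show k+d+2+(k+1) = 2*k+d+3 from by omega,
      show k+d+1+(k+1) = 2*k+d+2 from by omega]
  rw [cchoose k (d+1) (k+d+1) (by omega), cchoose k (k+d+1) (2*k+d+1) (by omega),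
      cchoose (k+1) (d+1) (k+d+2) (by omega), cchoose (k+1) (k+d+2) (2*k+d+3) (by omega),
      cchoose (k+1) d (k+d+1) (by omega), cchoose (k+1) (k+d+1) (2*k+d+2) (by omega)]
  have s2 : (-1:ℝ)^(d+1) = -((-1:ℝ)^d) := by rw [pow_succ]; ring
  rw [s2]
  have e1 : ((k+1)! : ℝ) = ((k:ℝ)+1) * (k ! : ℕ) := by
    rw [Nat.factorial_succ]; push_cast; ring
  have e3 : ((d+1)! : ℝ) = ((d:ℝ)+1) * (d ! : ℕ) := by
    rw [Nat.factorial_succ]; push_cast; ring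
  have e4 : ((k+d+2)! : ℝ) = ((k:ℝ)+(d:ℝ)+2) * ((k+d+1)! : ℕ) := by
    rw [show k+d+2 = (k+d+1)+1 from rfl, Nat.factorial_succ]; push_cast; ring
  have e5 : ((2*k+d+2)! : ℝ) = (2*(k:ℝ)+(d:ℝ)+2) * ((2*k+d+1)! : ℕ) := by
    rw [show 2*k+d+2 = (2*k+d+1)+1 from rfl, Nat.factorial_succ]; push_cast; ring
  have e6 : ((2*k+d+3)! : ℝ) = (2*(k:ℝ)+(d:ℝ)+3) * (2*(k:ℝ)+(d:ℝ)+2) * ((2*k+d+1)! : ℕ) := by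
    rw [show 2*k+d+3 = (2*k+d+1)+1+1 from rfl, Nat.factorial_succ, Nat.factorial_succ]
    push_cast; ring
  rw [e1, e3, e4, e5, e6]
  have h1 : ((k:ℝ)+1) ≠ 0 := by positivity
  have h2 : ((d:ℝ)+1) ≠ 0 := by positivity
  have h4 : ((k:ℝ)+(d:ℝ)+2) ≠ 0 := by positivity
  have h5 := fact_cast_ne k
  have h6 := fact_cast_ne d
  have h7 := fact_cast_ne (k+d+1)
  have h8 := fact_cast_ne (2*k+d+1)
  field_simp
  ring

lemma SA_diag (k : ℕ) :
    2*((k:ℝ)+2) * aa (k+1) k / ((k:ℝ)+1)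
      = 2 * aa (k+1) k - aa (k+1) (k+1) - aa k (k+1) := by
  rw [aa_eq_zero (by omega : k < k+1)]
  unfold aa
  rw [show k+1-k = 1 from by omega, show k+1-(k+1) = 0 from by omega,
      show k+1+k = 2*k+1 from by omega, show k+1+(k+1) = 2*k+2 from by omega]
  rw [cchoose k 1 (k+1) (by omega), cchoose k (k+1) (2*k+1) (by omega),
      cchoose (k+1) (k+1) (2*k+2) (by omega)]
  have e1 : ((k+1)! : ℝ) = ((k:ℝ)+1) * (k ! : ℕ) := by
    rw [Nat.factorial_succ]; push_cast; ring
  have e2 : ((2*k+2)! : ℝ) = (2*(k:ℝ)+2) * ((2*k+1)! : ℕ) := by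
    rw [show 2*k+2 = (2*k+1)+1 from rfl, Nat.factorial_succ]; push_cast; ring
  rw [e1, e2]
  have h1 : ((k:ℝ)+1) ≠ 0 := by positivity
  have h5 := fact_cast_ne k
  have h7 := fact_cast_ne (2*k+1)
  simp only [Nat.factorial_one, Nat.factorial_zero, Nat.choose_self]
  field_simp
  ring

lemma SB_diag (k : ℕ) :
    2*(k:ℝ) * aa k k / ((k:ℝ)+1)
      = aa (k+1) (k+1) - 2 * aa k k + aa k (k+1) := by
  rw [aa_eq_zero (by omega : k < k+1)]
  unfold aa
  rw [Nat.sub_self, show k+1-(k+1) = 0 from by omega,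
      show k+k = 2*k from by omega, show k+1+(k+1) = 2*k+2 from by omega]
  rw [cchoose k k (2*k) (by omega), cchoose (k+1) (k+1) (2*k+2) (by omega)]
  have e1 : ((k+1)! : ℝ) = ((k:ℝ)+1) * (k ! : ℕ) := by
    rw [Nat.factorial_succ]; push_cast; ring
  have e2 : ((2*k+2)! : ℝ) = (2*(k:ℝ)+2) * (2*(k:ℝ)+1) * ((2*k)! : ℕ) := by
    rw [show 2*k+2 = (2*k)+1+1 from rfl, Nat.factorial_succ, Nat.factorial_succ]
    push_cast; ring
  rw [e1, e2]
  have h1 : ((k:ℝ)+1) ≠ 0 := by positivity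
  have h5 := fact_cast_ne k
  have h7 := fact_cast_ne (2*k)
  simp only [Nat.choose_self]
  field_simp
  ring

lemma SA (n i : ℕ) (hn : 1 ≤ n) :
    2*((n:ℝ)+1) * aa n i / ((i:ℝ)+1) = 2 * aa n i - aa n (i+1) - aa (n-1) (i+1) := by
  rcases (by omega : i+2 ≤ n ∨ i+1 = n ∨ i = n ∨ n < i) with h|h|h|h
  · obtain ⟨d, rfl⟩ : ∃ d, n = i+d+2 := ⟨n-i-2, by omega⟩
    rw [show i+d+2-1 = i+d+1 from by omega]
    push_cast
    linear_combination SA_main i d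
  · obtain rfl : n = i+1 := h.symm
    rw [show i+1-1 = i from by omega]
    push_cast
    linear_combination SA_diag i
  · obtain rfl : n = i := h.symm
    rw [aa_eq_zero (by omega : n < n+1), aa_eq_zero (by omega : n-1 < n+1)]
    have h1 : ((n:ℝ)+1) ≠ 0 := by positivity
    field_simp
    ring
  · rw [aa_eq_zero h, aa_eq_zero (by omega : n < i+1), aa_eq_zero (by omega : n-1 < i+1)]
    simp

lemma SB (n i : ℕ) :
    2*(n:ℝ) * aa n i / ((i:ℝ)+1) = aa (n+1) (i+1) - 2 * aa n i + aa n (i+1) := by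
  rcases (by omega : i+1 ≤ n ∨ i = n ∨ n < i) with h|h|h
  · obtain ⟨d, rfl⟩ : ∃ d, n = i+d+1 := ⟨n-i-1, by omega⟩
    rw [show i+d+1+1 = i+d+2 from by omega]
    push_cast
    linear_combination SB_main i d
  · obtain rfl : n = i := h.symm
    linear_combination SB_diag n
  · rw [aa_eq_zero h, aa_eq_zero (by omega : n < i+1), aa_eq_zero (by omega : n+1 < i+1)]
    simp

lemma aa_zero (n : ℕ) : aa n 0 = (-1:ℝ)^n := by simp [aa]

lemma A_poly (n : ℕ) (hn : 1 ≤ n) :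
    C (2*((n:ℝ)+1)) * qPoly n
      = (2*X - 1) * shiftedLegendrePoly n - shiftedLegendrePoly (n-1) := by
  have expand : (2*X - 1) * shiftedLegendrePoly n
      = C 2 * (X * shiftedLegendrePoly n) - shiftedLegendrePoly n := by
    have h2 : (C 2 : ℝ[X]) = 2 := by
      rw [show (2:ℝ) = ((2:ℕ):ℝ) by norm_num, C_eq_natCast]; norm_num
    rw [h2]; ring
  ext j
  rw [coeff_C_mul, expand]
  cases j with
  | zero =>
    obtain ⟨t, rfl⟩ : ∃ t, n = t+1 := ⟨n-1, by omega⟩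
    simp [coeff_q_zero, coeff_p, mul_coeff_zero, aa_zero, pow_succ]
  | succ i =>
    rw [coeff_q_succ, coeff_sub, coeff_sub, coeff_C_mul, coeff_X_mul, coeff_p, coeff_p, coeff_p]
    have := SA n i hn
    push_cast at this ⊢
    linear_combination this

lemma B_poly (n : ℕ) :
    C (2*(n:ℝ)) * qPoly n
      = shiftedLegendrePoly (n+1) - (2*X - 1) * shiftedLegendrePoly n := by
  have h2 : (C 2 : ℝ[X]) = 2 := by
    rw [show (2:ℝ) = ((2:ℕ):ℝ) by norm_num, C_eq_natCast]; norm_num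
  have expand : (2*X - 1) * shiftedLegendrePoly n
      = C 2 * (X * shiftedLegendrePoly n) - shiftedLegendrePoly n := by
    rw [h2]; ring
  ext j
  rw [coeff_C_mul, expand]
  cases j with
  | zero =>
    simp [coeff_q_zero, coeff_p, mul_coeff_zero, aa_zero, pow_succ]
  | succ i =>
    rw [coeff_q_succ, coeff_sub, coeff_sub, coeff_C_mul, coeff_X_mul, coeff_p, coeff_p, coeff_p]
    have := SB n i
    push_cast at this ⊢
    linear_combination this

lemma polyP (m n : ℕ) (hm : 1 ≤ m) (hn : 1 ≤ n) :
    C ((n:ℝ)+1) * (shiftedLegendrePoly m * qPoly n)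
      - C ((m:ℝ)+1) * (shiftedLegendrePoly n * qPoly m)
    = C ((n:ℝ)-1) * (shiftedLegendrePoly (m-1) * qPoly (n-1))
      - C ((m:ℝ)-1) * (shiftedLegendrePoly (n-1) * qPoly (m-1)) := by
  have hc : (C (2:ℝ)) ≠ 0 := by
    simp only [ne_eq, C_eq_zero]; norm_num
  apply mul_left_cancel₀ hc
  have An := A_poly n hn
  have Am := A_poly m hm
  have Bn := B_poly (n-1)
  have Bm := B_poly (m-1)
  rw [show (n-1)+1 = n from by omega] at Bn
  rw [show (m-1)+1 = m from by omega] at Bm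
  have cn : ((n-1 : ℕ) : ℝ) = (n:ℝ)-1 := by
    have := Nat.cast_sub hn (R := ℝ); simpa using this
  have cm : ((m-1 : ℕ) : ℝ) = (m:ℝ)-1 := by
    have := Nat.cast_sub hm (R := ℝ); simpa using this
  rw [cn] at Bn
  rw [cm] at Bm
  calc C (2:ℝ) * (C ((n:ℝ)+1) * (shiftedLegendrePoly m * qPoly n)
      - C ((m:ℝ)+1) * (shiftedLegendrePoly n * qPoly m))
      = shiftedLegendrePoly m * (C (2*((n:ℝ)+1)) * qPoly n)
        - shiftedLegendrePoly n * (C (2*((m:ℝ)+1)) * qPoly m) := by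
        rw [C_mul, C_mul]
        have : (C (2:ℝ)) * C ((n:ℝ)+1) = C 2 * C ((n:ℝ)+1) := rfl
        ring
    _ = shiftedLegendrePoly m * ((2*X - 1) * shiftedLegendrePoly n - shiftedLegendrePoly (n-1))
        - shiftedLegendrePoly n * ((2*X - 1) * shiftedLegendrePoly m - shiftedLegendrePoly (m-1)) := by
        rw [An, Am]
    _ = shiftedLegendrePoly (m-1) * (shiftedLegendrePoly n - (2*X-1) * shiftedLegendrePoly (n-1))
        - shiftedLegendrePoly (n-1) * (shiftedLegendrePoly m - (2*X-1) * shiftedLegendrePoly (m-1)) := by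
        ring
    _ = shiftedLegendrePoly (m-1) * (C (2*((n:ℝ)-1)) * qPoly (n-1))
        - shiftedLegendrePoly (n-1) * (C (2*((m:ℝ)-1)) * qPoly (m-1)) := by
        rw [Bn, Bm]
    _ = C (2:ℝ) * (C ((n:ℝ)-1) * (shiftedLegendrePoly (m-1) * qPoly (n-1))
        - C ((m:ℝ)-1) * (shiftedLegendrePoly (n-1) * qPoly (m-1))) := by
        rw [C_mul, C_mul]
        ring

lemma natDegree_p_le (n : ℕ) : (shiftedLegendrePoly n).natDegree ≤ n := by
  rw [natDegree_le_iff_coeff_eq_zero]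
  intro j hj
  rw [coeff_p]
  exact aa_eq_zero hj

lemma natDegree_q_le (n : ℕ) : (qPoly n).natDegree ≤ n + 1 := by
  rw [natDegree_le_iff_coeff_eq_zero]
  intro j hj
  obtain ⟨i, rfl⟩ : ∃ i, j = i + 1 := ⟨j - 1, by omega⟩
  rw [coeff_q_succ, aa_eq_zero (by omega : n < i)]
  simp

lemma coeff_pq_zero (a b j : ℕ) (h : a + b + 1 < j) :
    (shiftedLegendrePoly a * qPoly b).coeff j = 0 := by
  apply coeff_eq_zero_of_natDegree_lt
  calc (shiftedLegendrePoly a * qPoly b).natDegree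
      ≤ (shiftedLegendrePoly a).natDegree + (qPoly b).natDegree := natDegree_mul_le
    _ ≤ a + (b + 1) := _root_.add_le_add (natDegree_p_le a) (natDegree_q_le b)
    _ < j := by omega

theorem stmt18 (m n : ℕ) (hm : 1 ≤ m) (hn : 1 ≤ n) :
    ((n : ℝ) + 1) * K m n - ((m : ℝ) + 1) * K n m =
      ((n : ℝ) - 1) * K (m - 1) (n - 1) - ((m : ℝ) - 1) * K (n - 1) (m - 1) := by
  have key : ∀ r : ℕ, ((n:ℝ)+1) * S m n r - ((m:ℝ)+1) * S n m r
      = ((n:ℝ)-1) * S (m-1) (n-1) r - ((m:ℝ)-1) * S (n-1) (m-1) r := by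
    intro r
    have h := congrArg (fun f : ℝ[X] => f.coeff (r+1)) (polyP m n hm hn)
    simpa only [S, coeff_sub, coeff_C_mul] using h
  have ext1 : K (m-1) (n-1) = ∑ r ∈ range (m+n+1), S (m-1) (n-1) r / ((r:ℝ)+2)^2 := by
    rw [K]
    apply Finset.sum_subset (Finset.range_subset_range.2 (by omega))
    intro r hr hnr
    simp only [Finset.mem_range] at hr hnr
    rw [S, coeff_pq_zero _ _ _ (by omega)]
    simp
  have ext2 : K (n-1) (m-1) = ∑ r ∈ range (m+n+1), S (n-1) (m-1) r / ((r:ℝ)+2)^2 := by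
    rw [K]
    apply Finset.sum_subset (Finset.range_subset_range.2 (by omega))
    intro r hr hnr
    simp only [Finset.mem_range] at hr hnr
    rw [S, coeff_pq_zero _ _ _ (by omega)]
    simp
  rw [K, K, show n+m = m+n from by omega, ext1, ext2,
    Finset.mul_sum, Finset.mul_sum, Finset.mul_sum, Finset.mul_sum,
    ← Finset.sum_sub_distrib, ← Finset.sum_sub_distrib]
  refine Finset.sum_congr rfl fun r _ => ?_
  have := key r
  field_simp
  linear_combination this
end
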